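/- The distance matrix of the d-cube has rank d + 1, and its all-ones vector is an eigenvector with eigenvalue d·2^{d-1}. -/

import Mathlib

open SimpleGraph Matrix Finset

/-- The distance matrix of a graph, with real entries. -/
noncomputable def distMatrix {V : Type*} [Fintype V] (G : SimpleGraph V) : Matrix V V ℝ :=
  Matrix.of fun x y => (G.dist x y : ℝ)

lemma distMatrix_isHermitian {V : Type*} [Fintype V] (G : SimpleGraph V) :
    (distMatrix G).IsHermitian := by
  ext x y
  simp [distMatrix, Matrix.conjTranspose_apply, SimpleGraph.dist_comm]

/-- The multiset of eigenvalues (with multiplicity) of the distance matrix of `G`. -/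
noncomputable def distSpec {V : Type*} [Fintype V] [DecidableEq V] (G : SimpleGraph V) :
    Multiset ℝ :=
  Finset.univ.val.map (distMatrix_isHermitian G).eigenvalues

/-- The `d`-cube: vertices are binary `d`-tuples, adjacent iff they differ in one coordinate. -/
def cubeGraph (d : ℕ) : SimpleGraph (Fin d → Bool) where
  Adj x y := hammingDist x y = 1
  symm := ⟨fun x y h => by show hammingDist y x = 1; rwa [hammingDist_comm]⟩
  loopless := ⟨fun x h => by simp [hammingDist_self] at h⟩

namespace DCubeAux

variable {d : ℕ}

/-- The characters of the hypercube, indexed by `Option (Fin d)`. -/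
def chi (j : Option (Fin d)) (x : Fin d → Bool) : ℝ :=
  match j with
  | none => 1
  | some i => if x i then -1 else 1

/-- Coefficients in the character expansion of the Hamming distance. -/
noncomputable def cc (d : ℕ) (j : Option (Fin d)) : ℝ :=
  match j with
  | none => d / 2
  | some _ => -(1 / 2)

lemma chi_sq (j : Option (Fin d)) (x : Fin d → Bool) : chi j x * chi j x = 1 := by
  cases j with
  | none => simp [chi]
  | some i => by_cases h : x i <;> simp [chi, h]

lemma sum_flip (i : Fin d) (f : (Fin d → Bool) → ℝ)
    (hf : ∀ x, f (Function.update x i (!x i)) = - f x) :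
    ∑ x : Fin d → Bool, f x = 0 := by
  have hinv : Function.Involutive (fun x : Fin d → Bool => Function.update x i (!x i)) := by
    intro x
    ext j
    by_cases h : j = i
    · subst h; simp
    · simp [Function.update_apply, h]
  have h1 : ∑ x : Fin d → Bool, f (Function.update x i (!x i)) = ∑ x : Fin d → Bool, f x :=
    Fintype.sum_bijective _ hinv.bijective _ _ (fun x => rfl)
  have h2 : ∑ x : Fin d → Bool, f (Function.update x i (!x i)) = - ∑ x : Fin d → Bool, f x := by
    simp only [hf, Finset.sum_neg_distrib]
  have := h1.symm.trans h2
  linarith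

lemma sum_chi_some (i : Fin d) : ∑ x : Fin d → Bool, chi (some i) x = 0 := by
  apply sum_flip i
  intro x
  by_cases h : x i <;> simp [chi, h]

lemma chi_some_update (i : Fin d) (x : Fin d → Bool) (j : Option (Fin d)) (hj : j ≠ some i) :
    chi j (Function.update x i (!x i)) = chi j x := by
  cases j with
  | none => rfl
  | some k =>
    have hk : k ≠ i := by rintro rfl; exact hj rfl
    simp [chi, Function.update_apply, hk]

lemma sum_chi_mul (j k : Option (Fin d)) :
    ∑ x : Fin d → Bool, chi j x * chi k x = if j = k then (2 : ℝ) ^ d else 0 := by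
  by_cases h : j = k
  · subst h
    simp only [chi_sq, if_pos rfl, Finset.sum_const, card_univ, nsmul_eq_mul, mul_one]
    simp [Fintype.card_fun]
  · rw [if_neg h]
    -- one of j, k is `some i` with the other different
    have h0 : ∀ z : Fin d → Bool, chi (none : Option (Fin d)) z = 1 := fun _ => rfl
    rcases jk : j with _ | i
    · rcases kk : k with _ | i'
      · subst jk; subst kk; exact absurd rfl h
      · apply sum_flip i'
        intro x
        have h1 : chi (some i') (Function.update x i' (!x i')) = - chi (some i') x := by
          by_cases hx : x i' <;> simp [chi, hx]
        rw [h0, h0, h1]; ring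
    · apply sum_flip i
      intro x
      have h1 : chi (some i) (Function.update x i (!x i)) = - chi (some i) x := by
        by_cases hx : x i <;> simp [chi, hx]
      have h2 : chi k (Function.update x i (!x i)) = chi k x :=
        chi_some_update i x k (by rintro rfl; exact h (jk ▸ rfl))
      rw [h1, h2]; ring

lemma ham_expand (x y : Fin d → Bool) :
    (hammingDist x y : ℝ) = ∑ j : Option (Fin d), cc d j * chi j x * chi j y := by
  have key : ∀ i : Fin d, (if x i ≠ y i then (1 : ℝ) else 0)
      = 1 / 2 + (-(1 / 2)) * chi (some i) x * chi (some i) y := by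
    intro i
    cases hx : x i <;> cases hy : y i <;> simp [chi, hx, hy] <;> norm_num
  have hcast : (hammingDist x y : ℝ) = ∑ i : Fin d, (if x i ≠ y i then (1 : ℝ) else 0) := by
    rw [hammingDist, Finset.card_filter]
    push_cast
    rfl
  rw [hcast, Fintype.sum_option]
  simp only [key, Finset.sum_add_distrib, Finset.sum_const, card_univ, Fintype.card_fin,
    nsmul_eq_mul]
  simp [cc, chi]
  ring

lemma hd_le_walk_length {x y : Fin d → Bool} (p : (cubeGraph d).Walk x y) :
    hammingDist x y ≤ p.length := by
  induction p with
  | nil => simp [hammingDist_self]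
  | @cons a b c h p ih =>
    have hab : hammingDist a b = 1 := h
    calc hammingDist a c ≤ hammingDist a b + hammingDist b c := hammingDist_triangle _ _ _
      _ ≤ 1 + p.length := by omega
      _ = (SimpleGraph.Walk.cons h p).length := by
            rw [SimpleGraph.Walk.length_cons]; omega

lemma exists_walk (n : ℕ) : ∀ (x y : Fin d → Bool), hammingDist x y = n →
    ∃ p : (cubeGraph d).Walk x y, p.length = n := by
  induction n with
  | zero =>
    intro x y h
    obtain rfl : x = y := hammingDist_eq_zero.mp h
    exact ⟨SimpleGraph.Walk.nil, rfl⟩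
  | succ n ih =>
    intro x y h
    have hxy : x ≠ y := by
      intro e; subst e; simp [hammingDist_self] at h
    obtain ⟨i, hi⟩ : ∃ i, x i ≠ y i := Function.ne_iff.mp hxy
    set x' := Function.update x i (y i) with hx'
    have hfilter : ({j | x' j ≠ y j} : Finset (Fin d)) = ({j | x j ≠ y j} : Finset (Fin d)).erase i := by
      ext j
      by_cases hji : j = i <;>
        simp [hx', Function.update_apply, hji, Finset.mem_erase]
    have h2 : hammingDist x' y = n := by
      rw [hammingDist, hfilter, Finset.card_erase_of_mem (by simpa using hi)]
      rw [hammingDist] at h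
      omega
    have h1 : (cubeGraph d).Adj x x' := by
      show hammingDist x x' = 1
      have : ({j | x j ≠ x' j} : Finset (Fin d)) = {i} := by
        ext j
        by_cases hji : j = i <;>
          simp [hx', Function.update_apply, hji, hi]
      rw [hammingDist, this, Finset.card_singleton]
    obtain ⟨p, hp⟩ := ih x' y h2
    exact ⟨SimpleGraph.Walk.cons h1 p, by simp [hp]⟩

lemma cube_dist (x y : Fin d → Bool) : (cubeGraph d).dist x y = hammingDist x y := by
  obtain ⟨p, hp⟩ := exists_walk (hammingDist x y) x y rfl
  have hr : (cubeGraph d).Reachable x y := ⟨p⟩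
  have le1 : (cubeGraph d).dist x y ≤ hammingDist x y := hp ▸ SimpleGraph.dist_le p
  obtain ⟨q, hq⟩ := hr.exists_walk_length_eq_dist
  have le2 : hammingDist x y ≤ (cubeGraph d).dist x y := hq ▸ hd_le_walk_length q
  omega

/-- The character matrix. -/
def M (d : ℕ) : Matrix (Option (Fin d)) (Fin d → Bool) ℝ := Matrix.of fun j x => chi j x

lemma M_mul_Mt : M d * (M d)ᵀ = ((2 : ℝ) ^ d) • (1 : Matrix (Option (Fin d)) (Option (Fin d)) ℝ) := by
  ext j k
  simp only [Matrix.mul_apply, Matrix.transpose_apply, M, Matrix.of_apply, Matrix.smul_apply,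
    Matrix.one_apply, smul_eq_mul]
  rw [sum_chi_mul j k]
  by_cases h : j = k <;> simp [h]

lemma dm_entry (j : Option (Fin d)) (y : Fin d → Bool) :
    (Matrix.diagonal (cc d) * M d) j y = cc d j * chi j y := by
  rw [Matrix.diagonal_mul]; rfl

lemma distMatrix_eq :
    distMatrix (cubeGraph d) = (M d)ᵀ * (Matrix.diagonal (cc d) * M d) := by
  ext x y
  rw [Matrix.mul_apply]
  simp only [Matrix.transpose_apply, dm_entry]
  show ((cubeGraph d).dist x y : ℝ) = _
  rw [cube_dist, ham_expand]
  apply Finset.sum_congr rfl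
  intro j _
  show cc d j * chi j x * chi j y = chi j x * (cc d j * chi j y)
  ring

end DCubeAux

open DCubeAux in
theorem dcube_stmt14 (d : ℕ) (hd : 1 ≤ d) :
    (distMatrix (cubeGraph d)).rank = d + 1 ∧
      distMatrix (cubeGraph d) *ᵥ (fun _ => (1 : ℝ)) =
        ((d : ℝ) * 2 ^ (d - 1)) • fun _ => (1 : ℝ) := by
  have hccne : ∀ j : Option (Fin d), cc d j ≠ 0 := by
    intro j
    cases j with
    | none =>
      simp only [cc]
      positivity
    | some i => norm_num [cc]
  constructor
  · -- rank
    have hub : (distMatrix (cubeGraph d)).rank ≤ d + 1 := by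
      rw [distMatrix_eq]
      calc ((M d)ᵀ * (Matrix.diagonal (cc d) * M d)).rank ≤ ((M d)ᵀ).rank :=
            Matrix.rank_mul_le_left _ _
        _ ≤ Fintype.card (Option (Fin d)) := Matrix.rank_le_card_width _
        _ = d + 1 := by simp
    have hdiag : M d * distMatrix (cubeGraph d) * (M d)ᵀ =
        Matrix.diagonal (fun j => ((2 : ℝ) ^ d * 2 ^ d) * cc d j) := by
      rw [distMatrix_eq]
      have : M d * ((M d)ᵀ * (Matrix.diagonal (cc d) * M d)) * (M d)ᵀ
          = (M d * (M d)ᵀ) * Matrix.diagonal (cc d) * (M d * (M d)ᵀ) := by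
        simp only [Matrix.mul_assoc]
      rw [this, M_mul_Mt]
      rw [Matrix.smul_mul, Matrix.one_mul, Matrix.mul_smul, Matrix.mul_one, smul_smul]
      rw [Matrix.smul_eq_diagonal_mul]
      rw [Matrix.diagonal_mul_diagonal]
    have hunit : IsUnit (Matrix.diagonal (fun j => ((2 : ℝ) ^ d * 2 ^ d) * cc d j)) := by
      rw [Matrix.isUnit_iff_isUnit_det, Matrix.det_diagonal]
      rw [isUnit_iff_ne_zero]
      apply Finset.prod_ne_zero_iff.mpr
      intro j _
      exact mul_ne_zero (by positivity) (hccne j)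
    have hlb : d + 1 ≤ (distMatrix (cubeGraph d)).rank := by
      have h1 : (Matrix.diagonal (fun j => ((2 : ℝ) ^ d * 2 ^ d) * cc d j)).rank
          = Fintype.card (Option (Fin d)) := Matrix.rank_of_isUnit _ hunit
      calc d + 1 = Fintype.card (Option (Fin d)) := by simp
        _ = (M d * distMatrix (cubeGraph d) * (M d)ᵀ).rank := by rw [hdiag, h1]
        _ ≤ (M d * distMatrix (cubeGraph d)).rank := Matrix.rank_mul_le_left _ _
        _ ≤ (distMatrix (cubeGraph d)).rank := Matrix.rank_mul_le_right _ _
    omega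
  · -- eigenvector
    ext x
    simp only [Matrix.mulVec, dotProduct, Pi.smul_apply, smul_eq_mul, mul_one]
    have : ∀ y, distMatrix (cubeGraph d) x y = ∑ j : Option (Fin d), cc d j * chi j x * chi j y := by
      intro y
      simp only [distMatrix, Matrix.of_apply]
      rw [cube_dist, ham_expand]
    simp only [this, mul_one]
    rw [Finset.sum_comm]
    have hterm : ∀ j : Option (Fin d), ∑ y : Fin d → Bool, cc d j * chi j x * chi j y
        = cc d j * chi j x * ∑ y : Fin d → Bool, chi j y := by
      intro j; rw [Finset.mul_sum]
    calc ∑ j : Option (Fin d), ∑ y : Fin d → Bool, cc d j * chi j x * chi j y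
        = ∑ j : Option (Fin d), cc d j * chi j x * ∑ y : Fin d → Bool, chi j y := by
          exact Finset.sum_congr rfl fun j _ => hterm j
      _ = (d : ℝ) * 2 ^ (d - 1) := by
          rw [Fintype.sum_option]
          have h1 : ∑ y : Fin d → Bool, chi (none : Option (Fin d)) y = (2 : ℝ) ^ d := by
            simp [chi, Fintype.card_fun]
          have h2 : ∀ i : Fin d, cc d (some i) * chi (some i) x *
              ∑ y : Fin d → Bool, chi (some i) y = 0 := by
            intro i; rw [sum_chi_some]; ring
          rw [Finset.sum_eq_zero (fun i _ => h2 i), add_zero, h1]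
          have hpow : (2 : ℝ) ^ d = 2 * 2 ^ (d - 1) := by
            rw [← pow_succ']
            congr 1
            omega
          show (d : ℝ) / 2 * 1 * 2 ^ d = _
          rw [hpow]
          ring
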